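/- Let C = (c_1,…,c_n) be a nonzero vector in ℂ^n with f_i(C) + c_i = 0 for all i, and K_{ij} = (∂f_i/∂x_j)(C) + δ_{ij}. Define the linear operators on ℂ[x_1,…,x_n]: D_+ = Σ_{i=1}^n f_i ∂/∂x_i, D_0 = Σ_{i,j=1}^n K_{ij} x_j ∂/∂x_i, U = Σ_{i=1}^n x_i ∂/∂x_i, and D_- = Σ_{i=1}^n c_i ∂/∂x_i. Then the commutator identities [D_-, D_+] = D_0 - U and [D_0, D_-] = D_- hold, where [A,B] = AB - BA. -/

import Mathlib

open MvPolynomial Finsupp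

lemma pderiv_comm' {n : ℕ} (i j : Fin n) (P : MvPolynomial (Fin n) ℂ) :
    pderiv i (pderiv j P) = pderiv j (pderiv i P) := by
  induction P using MvPolynomial.induction_on' with
  | add p q hp hq => simp [hp, hq]
  | monomial s r =>
    simp only [pderiv_monomial]
    by_cases h : i = j
    · subst h; rfl
    · have he : s - single j 1 - single i 1 = s - single i 1 - single j 1 := by
        rw [tsub_tsub, tsub_tsub, add_comm]
      have h1 : (s - single j 1 : Fin n →₀ ℕ) i = s i := by
        rw [tsub_apply, single_apply, if_neg (Ne.symm h), tsub_zero]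
      have h2 : (s - single i 1 : Fin n →₀ ℕ) j = s j := by
        rw [tsub_apply, single_apply, if_neg h, tsub_zero]
      rw [he, h1, h2]
      ring_nf

/-- The commutator identities `[D₋, D₊] = D₀ - U` and `[D₀, D₋] = D₋` for the
operators associated with a quadratic homogeneous system. -/
theorem commutator_identities (n : ℕ) (a : Fin n → Fin n → Fin n → ℂ)
    (f : Fin n → MvPolynomial (Fin n) ℂ)
    (hf : ∀ i, f i = ∑ j, ∑ k, C (a i j k) * X j * X k)
    (c : Fin n → ℂ) (hc : c ≠ 0)
    (hC : ∀ i, eval c (f i) + c i = 0)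
    (K : Matrix (Fin n) (Fin n) ℂ)
    (hK : ∀ i j, K i j = eval c (pderiv j (f i)) + if i = j then 1 else 0)
    (Dp D0 U Dm : MvPolynomial (Fin n) ℂ → MvPolynomial (Fin n) ℂ)
    (hDp : ∀ P, Dp P = ∑ i, f i * pderiv i P)
    (hD0 : ∀ P, D0 P = ∑ i, (∑ j, C (K i j) * X j) * pderiv i P)
    (hU : ∀ P, U P = ∑ i, X i * pderiv i P)
    (hDm : ∀ P, Dm P = ∑ i, C (c i) * pderiv i P) :
    (∀ P, Dm (Dp P) - Dp (Dm P) = D0 P - U P) ∧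
    (∀ P, D0 (Dm P) - Dm (D0 P) = Dm P) := by
  -- Key identity A
  have keyA : ∀ i, (∑ j, C (c j) * pderiv j (f i)) = (∑ j, C (K i j) * X j) - X i := by
    intro i
    have L : (∑ j, C (c j) * pderiv j (f i))
        = ∑ p, ∑ q, C (a i p q) * (C (c p) * X q + C (c q) * X p) := by
      simp only [hf, map_sum, pderiv_mul, pderiv_C, zero_mul, zero_add, pderiv_X,
        Pi.single_apply, Finset.mul_sum, mul_add, mul_ite, ite_mul, mul_zero, zero_mul, mul_one]
      rw [Finset.sum_comm]
      refine Finset.sum_congr rfl fun p _ => ?_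
      rw [Finset.sum_comm]
      refine Finset.sum_congr rfl fun q _ => ?_
      simp only [Finset.sum_add_distrib, Finset.sum_ite_eq, Finset.mem_univ, if_true]
      ring
    have R : (∑ j, C (K i j) * X j)
        = (∑ p, ∑ q, C (a i p q) * (C (c p) * X q + C (c q) * X p)) + X i := by
      simp only [hK, hf, map_sum, pderiv_mul, pderiv_C, zero_mul, zero_add, pderiv_X,
        Pi.single_apply, map_add, map_mul, eval_C, eval_X, mul_ite, ite_mul, mul_zero, zero_mul,
        mul_one, one_mul, C_add, C_mul, add_mul, Finset.sum_mul, Finset.sum_add_distrib,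
        apply_ite (eval c), apply_ite (C (σ := Fin n) (R := ℂ)), map_zero, C_0, C_1,
        Finset.sum_ite_eq, Finset.mem_univ, if_true]
      congr 1
      have e1 : (∑ x : Fin n, ∑ p : Fin n, ∑ q : Fin n,
          if p = x then C (a i p q) * C (c q) * X x else 0)
          = ∑ p, ∑ q, C (a i p q) * (C (c q) * X p) := by
        rw [Finset.sum_comm]
        refine Finset.sum_congr rfl fun p _ => ?_
        rw [Finset.sum_comm]
        refine Finset.sum_congr rfl fun q _ => ?_
        simp only [Finset.sum_ite_eq, Finset.mem_univ, if_true]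
        ring
      have e2 : (∑ x : Fin n, ∑ p : Fin n, ∑ q : Fin n,
          if q = x then C (a i p q) * C (c p) * X x else 0)
          = ∑ p, ∑ q, C (a i p q) * (C (c p) * X q) := by
        rw [Finset.sum_comm]
        refine Finset.sum_congr rfl fun p _ => ?_
        rw [Finset.sum_comm]
        refine Finset.sum_congr rfl fun q _ => ?_
        simp only [Finset.sum_ite_eq, Finset.mem_univ, if_true]
        ring
      rw [e1, e2, ← Finset.sum_add_distrib]
      refine Finset.sum_congr rfl fun p _ => ?_
      rw [← Finset.sum_add_distrib]
      refine Finset.sum_congr rfl fun q _ => ?_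
      ring
    rw [L, R]; ring
  -- Key identity B
  have keyB : ∀ i, (∑ j, K i j * c j) = -c i := by
    intro i
    have hd : ∀ j, eval c (pderiv j (f i))
        = (∑ q, a i j q * c q) + (∑ p, a i p j * c p) := by
      intro j
      simp only [hf, map_sum, pderiv_mul, pderiv_C, zero_mul, zero_add, pderiv_X,
        Pi.single_apply, map_add, map_mul, eval_C, eval_X, mul_ite, ite_mul, mul_zero, zero_mul,
        mul_one, apply_ite (eval c), map_zero, Finset.sum_add_distrib]
      congr 1
      · rw [Finset.sum_comm]
        refine Finset.sum_congr rfl fun q _ => ?_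
        simp only [Finset.sum_ite_eq', Finset.mem_univ, if_true]
      · refine Finset.sum_congr rfl fun p _ => ?_
        simp only [Finset.sum_ite_eq', Finset.mem_univ, if_true]
    have hev : eval c (f i) = ∑ p, ∑ q, a i p q * c p * c q := by
      simp [hf]
    have h1 : (∑ j, (eval c (pderiv j (f i))) * c j) = 2 * eval c (f i) := by
      simp only [hd, add_mul, Finset.sum_add_distrib, Finset.sum_mul]
      rw [two_mul, hev]
      congr 1
      · exact Finset.sum_congr rfl fun p _ => Finset.sum_congr rfl fun q _ => by ring
      · rw [Finset.sum_comm]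
    have h2 : eval c (f i) = -c i := by linear_combination hC i
    simp only [hK, add_mul, Finset.sum_add_distrib, ite_mul, one_mul, zero_mul,
      Finset.sum_ite_eq, Finset.mem_univ, if_true, h1, h2]
    ring
  constructor
  · intro P
    have e1 : Dm (Dp P) = (∑ i, (∑ j, C (c j) * pderiv j (f i)) * pderiv i P)
        + ∑ i, ∑ j, C (c j) * f i * pderiv i (pderiv j P) := by
      rw [hDm, hDp]
      simp only [map_sum, pderiv_mul, Finset.mul_sum, mul_add]
      rw [Finset.sum_comm]
      simp only [Finset.sum_mul, ← Finset.sum_add_distrib]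
      refine Finset.sum_congr rfl fun i _ => Finset.sum_congr rfl fun j _ => ?_
      rw [pderiv_comm' i j]
      ring
    have e2 : Dp (Dm P) = ∑ i, ∑ j, C (c j) * f i * pderiv i (pderiv j P) := by
      rw [hDp]
      simp only [hDm, map_sum, pderiv_C_mul, Finset.mul_sum]
      exact Finset.sum_congr rfl fun i _ => Finset.sum_congr rfl fun j _ => by ring
    rw [e1, e2, add_sub_cancel_right, hD0, hU]
    rw [← Finset.sum_sub_distrib]
    refine Finset.sum_congr rfl fun i _ => ?_
    rw [keyA i, sub_mul]
  · intro P
    have hA : ∀ i : Fin n, (∑ j, C (c j) * C (K i j) : MvPolynomial (Fin n) ℂ) = -C (c i) := by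
      intro i
      have h : (∑ j, C (c j) * C (K i j) : MvPolynomial (Fin n) ℂ) = C (∑ j, K i j * c j) := by
        rw [map_sum]
        exact Finset.sum_congr rfl fun j _ => by rw [← C_mul, mul_comm]
      rw [h, keyB i, map_neg]
    have e1 : D0 (Dm P) = ∑ i, ∑ j,
        (∑ k, C (K i k) * X k) * (C (c j) * pderiv i (pderiv j P)) := by
      rw [hD0]
      simp only [hDm, map_sum, pderiv_C_mul, Finset.mul_sum]
    have e2 : Dm (D0 P) = (∑ i, ∑ j, C (c j) * C (K i j) * pderiv i P)
        + ∑ i, ∑ j, (∑ k, C (K i k) * X k) * (C (c j) * pderiv i (pderiv j P)) := by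
      rw [hDm, hD0]
      simp only [map_sum, pderiv_mul, pderiv_C_mul, pderiv_C, pderiv_X, Pi.single_apply,
        mul_ite, ite_mul, mul_zero, zero_mul, zero_add, mul_one, Finset.sum_ite_eq',
        Finset.mem_univ, if_true, Finset.mul_sum, mul_add]
      rw [Finset.sum_comm]
      simp only [← Finset.sum_add_distrib]
      refine Finset.sum_congr rfl fun i _ => Finset.sum_congr rfl fun j _ => ?_
      rw [pderiv_comm' i j]
      ring
    have hsum : (∑ i, ∑ j, C (c j) * C (K i j) * pderiv i P)
        = -(∑ i, C (c i) * pderiv i P) := by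
      rw [← Finset.sum_neg_distrib]
      refine Finset.sum_congr rfl fun i _ => ?_
      rw [← Finset.sum_mul, hA i, neg_mul]
    rw [e1, e2, hDm, sub_add_eq_sub_sub, sub_sub_cancel_left, hsum, neg_neg]
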